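/- The map sending a pair (a, b) of unit quaternions to the ℝ-linear map q ↦ a * q * b̄ is a group homomorphism from S³ × S³ (unit quaternions under multiplication) to the orthogonal group O(4) of ℍ, whose kernel is {(1,1), (-1,-1)}. -/

import Mathlib

open Quaternion Metric

noncomputable def cliffF (a b : sphere (0 : Quaternion ℝ) 1) :
    Quaternion ℝ ≃ₗᵢ[ℝ] Quaternion ℝ where
  toFun q := (a : Quaternion ℝ) * q * star (b : Quaternion ℝ)
  invFun q := star (a : Quaternion ℝ) * q * (b : Quaternion ℝ)
  map_add' x y := by noncomm_ring
  map_smul' r x := by simp [Algebra.smul_mul_assoc, Algebra.mul_smul_comm]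
  left_inv x := by
    have ha : star (a : Quaternion ℝ) * a = 1 := by
      rw [Quaternion.star_mul_self, Quaternion.normSq_eq_norm_mul_self,
        mem_sphere_zero_iff_norm.mp a.2]; norm_num
    have hb : star (b : Quaternion ℝ) * b = 1 := by
      rw [Quaternion.star_mul_self, Quaternion.normSq_eq_norm_mul_self,
        mem_sphere_zero_iff_norm.mp b.2]; norm_num
    calc star (a:Quaternion ℝ) * ((a:Quaternion ℝ) * x * star (b:Quaternion ℝ)) * b
        = (star (a:Quaternion ℝ) * a) * x * (star (b:Quaternion ℝ) * b) := by noncomm_ring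
      _ = x := by rw [ha, hb]; noncomm_ring
  right_inv x := by
    have ha : (a : Quaternion ℝ) * star (a : Quaternion ℝ) = 1 := by
      rw [Quaternion.self_mul_star, Quaternion.normSq_eq_norm_mul_self,
        mem_sphere_zero_iff_norm.mp a.2]; norm_num
    have hb : (b : Quaternion ℝ) * star (b : Quaternion ℝ) = 1 := by
      rw [Quaternion.self_mul_star, Quaternion.normSq_eq_norm_mul_self,
        mem_sphere_zero_iff_norm.mp b.2]; norm_num
    calc (a:Quaternion ℝ) * (star (a:Quaternion ℝ) * x * (b:Quaternion ℝ)) * star (b:Quaternion ℝ)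
        = ((a:Quaternion ℝ) * star (a:Quaternion ℝ)) * x * ((b:Quaternion ℝ) * star (b:Quaternion ℝ)) := by noncomm_ring
      _ = x := by rw [ha, hb]; noncomm_ring
  norm_map' x := by
    simp [norm_mul, Quaternion.norm_star, mem_sphere_zero_iff_norm.mp a.2,
      mem_sphere_zero_iff_norm.mp b.2]

/-- The map `(a,b) ↦ (q ↦ a * q * b̄)` is a group homomorphism from S³ × S³ to the group of
linear isometries of ℍ, with kernel `{(1,1), (-1,-1)}`. -/
theorem clifford_homomorphism :
    ∃ φ : (Metric.sphere (0 : Quaternion ℝ) 1 × Metric.sphere (0 : Quaternion ℝ) 1) →*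
        (Quaternion ℝ ≃ₗᵢ[ℝ] Quaternion ℝ),
      (∀ (a b : Metric.sphere (0 : Quaternion ℝ) 1) (q : Quaternion ℝ),
          φ (a, b) q = (a : Quaternion ℝ) * q * star (b : Quaternion ℝ)) ∧
      (∀ (a b : Metric.sphere (0 : Quaternion ℝ) 1),
          φ (a, b) = 1 ↔
            ((a : Quaternion ℝ) = 1 ∧ (b : Quaternion ℝ) = 1) ∨
            ((a : Quaternion ℝ) = -1 ∧ (b : Quaternion ℝ) = -1)) := by
  refine ⟨MonoidHom.mk' (fun p => cliffF p.1 p.2) ?_, fun a b q => rfl, ?_⟩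
  · intro x y
    refine LinearIsometryEquiv.ext fun q => ?_
    show (↑(x.1 * y.1) : Quaternion ℝ) * q * star (↑(x.2 * y.2) : Quaternion ℝ)
      = (x.1 : Quaternion ℝ) * ((y.1 : Quaternion ℝ) * q * star (y.2 : Quaternion ℝ)) * star (x.2 : Quaternion ℝ)
    push_cast [star_mul]
    noncomm_ring
  · intro a b
    constructor
    · intro h
      have hq : ∀ q : Quaternion ℝ, (a : Quaternion ℝ) * q * star (b : Quaternion ℝ) = q := by
        intro q
        have := LinearIsometryEquiv.ext_iff.mp h q
        exact this
      have ha1 : star (a : Quaternion ℝ) * a = 1 := by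
        rw [Quaternion.star_mul_self, Quaternion.normSq_eq_norm_mul_self,
          mem_sphere_zero_iff_norm.mp a.2]; norm_num
      have hab : (a : Quaternion ℝ) * star (b : Quaternion ℝ) = 1 := by
        simpa using hq 1
      have hba : (b : Quaternion ℝ) = a := by
        have : star (b : Quaternion ℝ) = star (a : Quaternion ℝ) := by
          calc star (b : Quaternion ℝ)
              = (star (a:Quaternion ℝ) * (a:Quaternion ℝ)) * star (b:Quaternion ℝ) := by
                rw [ha1, one_mul]
            _ = star (a:Quaternion ℝ) * ((a:Quaternion ℝ) * star (b:Quaternion ℝ)) := by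
                noncomm_ring
            _ = star (a : Quaternion ℝ) := by rw [hab, mul_one]
        exact star_injective this
      have hcomm : ∀ q : Quaternion ℝ, (a : Quaternion ℝ) * q = q * a := by
        intro q
        have := hq q
        rw [hba] at this
        calc (a : Quaternion ℝ) * q
            = ((a:Quaternion ℝ) * q * star (a:Quaternion ℝ)) * (a:Quaternion ℝ) := by
              rw [mul_assoc, mul_assoc, ha1, mul_one]
          _ = q * a := by rw [this]
      have hI := hcomm ⟨0, 1, 0, 0⟩
      have hJ := hcomm ⟨0, 0, 1, 0⟩
      rw [Quaternion.ext_iff] at hI hJ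
      erw [Quaternion.re_mul, Quaternion.re_mul, Quaternion.imI_mul, Quaternion.imI_mul, Quaternion.imJ_mul, Quaternion.imJ_mul, Quaternion.imK_mul, Quaternion.imK_mul] at hI hJ
      simp [Quaternion.re_mul, Quaternion.imI_mul, Quaternion.imJ_mul, Quaternion.imK_mul] at hI hJ
      obtain ⟨h1, h2⟩ := hI
      obtain ⟨-, h3⟩ := hJ
      have hK0 : (a : Quaternion ℝ).imK = 0 := by linarith
      have hJ0 : (a : Quaternion ℝ).imJ = 0 := by linarith
      have hI0 : (a : Quaternion ℝ).imI = 0 := by linarith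
      have him : (a : Quaternion ℝ) = ((a : Quaternion ℝ).re : Quaternion ℝ) := by
        apply QuaternionAlgebra.ext <;> simp [hI0, hJ0, hK0]
      have hre : |(a : Quaternion ℝ).re| = 1 := by
        have := mem_sphere_zero_iff_norm.mp a.2
        rw [him, Quaternion.norm_coe, Real.norm_eq_abs] at this
        exact this
      rcases abs_eq (by norm_num : (0:ℝ) ≤ 1) |>.mp hre with h | h
      · exact Or.inl ⟨by rw [him, h]; norm_num, by rw [hba, him, h]; norm_num⟩
      · exact Or.inr ⟨by rw [him, h]; norm_num, by rw [hba, him, h]; norm_num⟩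
    · rintro (⟨ha, hb⟩ | ⟨ha, hb⟩) <;>
        · refine LinearIsometryEquiv.ext fun q => ?_
          show (a : Quaternion ℝ) * q * star (b : Quaternion ℝ) = q
          simp [ha, hb]
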